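/- For Λ=0, the Poisson bracket {f,g} = ∂f/∂μ⁰ ∂g/∂μ¹ − ∂f/∂μ¹ ∂g/∂μ⁰ applied to the monomials w^p_{m,a} gives {w^p_{m,a}, w^q_{n,b}} = (m(q-1)-n(p-1)) w^{p+q-2}_{m+n,a+b}. -/
import Mathlib


/-- The Λ = 0 Poisson bracket `{f,g} = ∂f/∂μ⁰ ∂g/∂μ¹ − ∂f/∂μ¹ ∂g/∂μ⁰` on
functions of the four twistor coordinates `(μ⁰, μ¹, λ₀, λ₁)`. -/
noncomputable def pb0 (f g : ℂ → ℂ → ℂ → ℂ → ℂ) : ℂ → ℂ → ℂ → ℂ → ℂ :=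
  fun x y s t =>
    deriv (fun u => f u y s t) x * deriv (fun u => g x u s t) y
    - deriv (fun u => f x u s t) y * deriv (fun u => g u y s t) x

/-- The Laurent monomial `c · (μ⁰)^i (μ¹)^j λ₀^k λ₁^l`. -/
noncomputable def mon (c : ℂ) (i j k l : ℤ) : ℂ → ℂ → ℂ → ℂ → ℂ :=
  fun x y s t => c * x ^ i * y ^ j * s ^ k * t ^ l

/-- For `w^p_{m,a} = (1/2)(μ⁰)^{p+m-1} (μ¹)^{p-m-1} λ₀^{a+2-p} λ₁^{-(p+a-2)}`,
the canonical Poisson bracket in the μ-variables gives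
`{w^p_{m,a}, w^q_{n,b}} = (m(q-1)-n(p-1)) w^{p+q-2}_{m+n,a+b}`. -/
theorem flat_poisson_bracket_of_generators (p m a q n b : ℚ)
    (k₁ k₂ e₁ e₂ l₁ l₂ g₁ g₂ : ℤ)
    (hk₁ : 0 ≤ k₁) (hk₂ : 0 ≤ k₂) (hl₁ : 0 ≤ l₁) (hl₂ : 0 ≤ l₂)
    (h₁ : (k₁ : ℚ) = p + m - 1) (h₂ : (k₂ : ℚ) = p - m - 1)
    (h₃ : (e₁ : ℚ) = a + 2 - p) (h₄ : (e₂ : ℚ) = 2 - p - a)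
    (h₅ : (l₁ : ℚ) = q + n - 1) (h₆ : (l₂ : ℚ) = q - n - 1)
    (h₇ : (g₁ : ℚ) = b + 2 - q) (h₈ : (g₂ : ℚ) = 2 - q - b)
    (x y s t : ℂ) (hx : x ≠ 0) (hy : y ≠ 0) (hs : s ≠ 0) (ht : t ≠ 0) :
    pb0 (mon (1/2) k₁ k₂ e₁ e₂) (mon (1/2) l₁ l₂ g₁ g₂) x y s t
      = ((m * (q - 1) - n * (p - 1) : ℚ) : ℂ) *
          mon (1/2) (k₁ + l₁ - 1) (k₂ + l₂ - 1) (e₁ + g₁) (e₂ + g₂) x y s t := by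
  have key : (k₁ : ℂ) * l₂ - k₂ * l₁ = 2 * ((m * (q - 1) - n * (p - 1) : ℚ) : ℂ) := by
    have hq : (k₁ : ℚ) * l₂ - k₂ * l₁ = 2 * (m * (q - 1) - n * (p - 1)) := by
      rw [h₁, h₂, h₅, h₆]; ring
    have := congrArg (fun r : ℚ => (r : ℂ)) hq
    push_cast at this ⊢
    exact this
  simp only [pb0, mon, deriv_mul_const_field, deriv_const_mul_field, deriv_zpow]
  rw [show k₁ + l₁ - 1 = (k₁ - 1) + l₁ by ring, show k₂ + l₂ - 1 = k₂ + (l₂ - 1) by ring,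
    zpow_add₀ hx, zpow_add₀ hy, zpow_add₀ hs, zpow_add₀ ht]
  have ex1 : x ^ k₁ = x ^ (k₁ - 1) * x := by rw [← zpow_add_one₀ hx]; ring_nf
  have ex2 : x ^ l₁ = x ^ (l₁ - 1) * x := by rw [← zpow_add_one₀ hx]; ring_nf
  have ey1 : y ^ k₂ = y ^ (k₂ - 1) * y := by rw [← zpow_add_one₀ hy]; ring_nf
  have ey2 : y ^ l₂ = y ^ (l₂ - 1) * y := by rw [← zpow_add_one₀ hy]; ring_nf
  rw [ex1, ex2, ey1, ey2]
  linear_combination (x ^ (k₁ - 1) * x ^ (l₁ - 1) * y ^ (k₂ - 1) * y ^ (l₂ - 1)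
    * s ^ e₁ * s ^ g₁ * t ^ e₂ * t ^ g₂ * x * y / 4) * key
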